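/- Realizability equivalence: the separated GR(k) game (GS, φ) is realizable (system wins from every initial configuration) if and only if the weak Büchi game (GS, GF(acc)) is realizable, where acc is the union of accepting SCCs determined by φ. -/

import Mathlib

open scoped Classical

/-- Reachability: reflexive-transitive closure of the edge relation. -/
def Reach {V : Type*} (E : V → V → Prop) : V → V → Prop := Relation.ReflTransGen E

/-- Two vertices lie in the same strongly connected component: mutual reachability. -/
def SameSCC {V : Type*} (E : V → V → Prop) (s t : V) : Prop := Reach E s t ∧ Reach E t s

/-- Edge relation of the product of two directed graphs (componentwise). -/
def prodEdge {I O : Type*} (EI : I → I → Prop) (EO : O → O → Prop) :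
    I × O → I × O → Prop := fun p q => EI p.1 q.1 ∧ EO p.2 q.2

/-- A system strategy: given the history of states so far and the new environment
input, choose the new output. -/
abbrev Strat (I O : Type*) := List (I × O) → I → O

/-- The history (prefix) of a play up to and including position `n`. -/
def hist {I O : Type*} (π : ℕ → I × O) (n : ℕ) : List (I × O) := (List.range (n + 1)).map π

/-- A play is consistent with system strategy `f` from state `s`. -/
def Consistent {I O : Type*} (f : Strat I O) (s : I × O) (π : ℕ → I × O) : Prop :=
  π 0 = s ∧ ∀ n, (π (n + 1)).2 = f (hist π n) (π (n + 1)).1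

/-- All environment moves along the play are edges of the input graph. -/
def EnvLegal {I O : Type*} (EI : I → I → Prop) (π : ℕ → I × O) : Prop :=
  ∀ n, EI (π n).1 (π (n + 1)).1

/-- All system moves along the play are edges of the output graph. -/
def SysLegal {I O : Type*} (EO : O → O → Prop) (π : ℕ → I × O) : Prop :=
  ∀ n, EO (π n).2 (π (n + 1)).2

/-- The play satisfies `P` infinitely often. -/
def InfOften {V : Type*} (P : V → Prop) (π : ℕ → V) : Prop := ∀ N, ∃ n, N ≤ n ∧ P (π n)

/-- `f` is a winning system strategy for the Büchi condition `GF acc` from `s`: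
every play from `s` consistent with `f` in which the environment moves legally has
legal system moves and visits `acc` infinitely often. -/
def WinningFrom {I O : Type*} (EI : I → I → Prop) (EO : O → O → Prop)
    (acc : I × O → Prop) (f : Strat I O) (s : I × O) : Prop :=
  ∀ π : ℕ → I × O, Consistent f s π → EnvLegal EI π →
    SysLegal EO π ∧ InfOften acc π

/-- The system can win the weak Büchi game `GF acc` from `s`. -/
def SysWins {I O : Type*} (EI : I → I → Prop) (EO : O → O → Prop)
    (acc : I × O → Prop) (s : I × O) : Prop := ∃ f, WinningFrom EI EO acc f s

/-- Projection onto the inputs of the SCC (of the product graph) containing `s`. -/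
def sccProjI {I O : Type*} (EI : I → I → Prop) (EO : O → O → Prop) (s : I × O) : Set I :=
  {i' | ∃ o', SameSCC (prodEdge EI EO) s (i', o')}

/-- Projection onto the outputs of the SCC (of the product graph) containing `s`. -/
def sccProjO {I O : Type*} (EI : I → I → Prop) (EO : O → O → Prop) (s : I × O) : Set O :=
  {o' | ∃ i', SameSCC (prodEdge EI EO) s (i', o')}

/-- A play satisfies the GR(k) formula
`⋀_l (⋀_i GF a_{l,i} → ⋀_j GF g_{l,j})`, with assumptions over inputs and
guarantees over outputs. -/
def SatGRk {I O : Type*} {k : ℕ} {nl ml : Fin k → ℕ}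
    (a : ∀ l : Fin k, Fin (nl l) → I → Prop)
    (g : ∀ l : Fin k, Fin (ml l) → O → Prop) (π : ℕ → I × O) : Prop :=
  ∀ l, (∀ i, InfOften (fun p : I × O => a l i p.1) π) →
    (∀ j, InfOften (fun p : I × O => g l j p.2) π)

/-- A state is accepting: for every conjunct `l`, either every guarantee is satisfied
somewhere in the output projection of its SCC, or some assumption is satisfied
nowhere in the input projection of its SCC. -/
def AcceptingSt {I O : Type*} {k : ℕ} {nl ml : Fin k → ℕ}
    (EI : I → I → Prop) (EO : O → O → Prop)
    (a : ∀ l : Fin k, Fin (nl l) → I → Prop)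
    (g : ∀ l : Fin k, Fin (ml l) → O → Prop) (s : I × O) : Prop :=
  ∀ l, (∀ j, ∃ o' ∈ sccProjO EI EO s, g l j o') ∨
    (∃ ii, ∀ i' ∈ sccProjI EI EO s, ¬ a l ii i')

/-- The system wins the separated GR(k) game from `s`. -/
def WinsGRk {I O : Type*} {k : ℕ} {nl ml : Fin k → ℕ}
    (EI : I → I → Prop) (EO : O → O → Prop)
    (a : ∀ l : Fin k, Fin (nl l) → I → Prop)
    (g : ∀ l : Fin k, Fin (ml l) → O → Prop) (s : I × O) : Prop :=
  ∃ f : Strat I O, ∀ π : ℕ → I × O, Consistent f s π → EnvLegal EI π →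
    SysLegal EO π ∧ SatGRk a g π

section PathLib

variable {V : Type*} (E : V → V → Prop)

lemma sameSCC_refl (v : V) : SameSCC E v v := ⟨.refl, .refl⟩

lemma sameSCC_symm {s t : V} (h : SameSCC E s t) : SameSCC E t s := ⟨h.2, h.1⟩

lemma sameSCC_trans {s t u : V} (h : SameSCC E s t) (h' : SameSCC E t u) :
    SameSCC E s u := ⟨h.1.trans h'.1, h'.2.trans h.2⟩

/-- Last vertex of the walk `a :: l`. -/
def lastV (a : V) : List V → V
  | [] => a
  | b :: t => lastV b t

/-- `a :: l` is a walk along edges of `E`. -/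
def IsPath (a : V) : List V → Prop
  | [] => True
  | b :: t => E a b ∧ IsPath b t

@[simp] lemma lastV_nil (a : V) : lastV a ([] : List V) = a := rfl
@[simp] lemma lastV_cons (a b : V) (l : List V) : lastV a (b :: l) = lastV b l := rfl
@[simp] lemma isPath_nil (a : V) : IsPath E a ([] : List V) := trivial
@[simp] lemma isPath_cons (a b : V) (l : List V) :
    IsPath E a (b :: l) ↔ E a b ∧ IsPath E b l := Iff.rfl

lemma lastV_append (a : V) (l₁ l₂ : List V) :
    lastV a (l₁ ++ l₂) = lastV (lastV a l₁) l₂ := by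
  induction l₁ generalizing a with
  | nil => rfl
  | cons b t ih => simp [ih]

lemma lastV_mem (a : V) (l : List V) : lastV a l ∈ a :: l := by
  induction l generalizing a with
  | nil => simp
  | cons b t ih =>
    rcases List.mem_cons.1 (ih b) with h | h
    · simp [h]
    · simp [List.mem_cons.2 (Or.inr h)]

lemma isPath_append {a : V} {l₁ l₂ : List V} :
    IsPath E a (l₁ ++ l₂) ↔ IsPath E a l₁ ∧ IsPath E (lastV a l₁) l₂ := by
  induction l₁ generalizing a with
  | nil => simp
  | cons b t ih => simp [ih, and_assoc]

lemma exists_path {a b : V} (h : Reach E a b) :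
    ∃ l, IsPath E a l ∧ lastV a l = b := by
  induction h with
  | refl => exact ⟨[], trivial, rfl⟩
  | @tail b' c' _ hbc ih =>
    obtain ⟨l, hl, hlast⟩ := ih
    refine ⟨l ++ [c'], (isPath_append E).2 ⟨hl, ?_⟩, ?_⟩
    · simp [hlast, hbc]
    · simp [lastV_append, hlast]

lemma exists_tour [Fintype V] {p q : V} (h : SameSCC E p q) :
    ∃ l, IsPath E p l ∧ lastV p l = q ∧ ∀ x, SameSCC E p x → x ∈ p :: l := by
  have aux : ∀ (ys : List V) (c : V), SameSCC E p c →
      ∃ l, IsPath E c l ∧ lastV c l = q ∧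
        ∀ x ∈ ys, SameSCC E p x → x ∈ c :: l := by
    intro ys
    induction ys with
    | nil =>
      intro c hc
      obtain ⟨l, hl, hlast⟩ := exists_path E (hc.2.trans h.1)
      exact ⟨l, hl, hlast, by simp⟩
    | cons y ys ih =>
      intro c hc
      by_cases hy : SameSCC E p y
      · obtain ⟨l₁, h₁, hl₁⟩ := exists_path E (hc.2.trans hy.1)
        obtain ⟨l₂, h₂, hl₂, hmem⟩ := ih y hy
        refine ⟨l₁ ++ l₂, (isPath_append E).2 ⟨h₁, by rw [hl₁]; exact h₂⟩,
          by rw [lastV_append, hl₁]; exact hl₂, ?_⟩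
        intro x hx hxc
        have hyy : y ∈ c :: (l₁ ++ l₂) := by
          have := lastV_mem c l₁
          rw [hl₁] at this
          rcases List.mem_cons.1 this with h' | h'
          · simp [h']
          · exact List.mem_cons.2 (Or.inr (List.mem_append.2 (Or.inl h')))
        rcases List.mem_cons.1 hx with rfl | hx'
        · exact hyy
        · rcases List.mem_cons.1 (hmem x hx' hxc) with rfl | h'
          · exact hyy
          · exact List.mem_cons.2 (Or.inr (List.mem_append.2 (Or.inr h')))
      · obtain ⟨l, h1, h2, hmem⟩ := ih c hc
        refine ⟨l, h1, h2, ?_⟩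
        intro x hx hxc
        rcases List.mem_cons.1 hx with rfl | hx'
        · exact absurd hxc hy
        · exact hmem x hx' hxc
  obtain ⟨l, h1, h2, hmem⟩ := aux (Finset.univ.toList) p (sameSCC_refl E p)
  exact ⟨l, h1, h2, fun x hx => hmem x (by simp) hx⟩

/-- A chosen path from `p` to `q` that visits every vertex of the SCC of `p`. -/
noncomputable def tourL [Fintype V] (p q : V) : List V :=
  if h : SameSCC E p q then (exists_tour E h).choose else []

lemma tourL_spec [Fintype V] {p q : V} (h : SameSCC E p q) :
    IsPath E p (tourL E p q) ∧ lastV p (tourL E p q) = q ∧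
      ∀ x, SameSCC E p x → x ∈ p :: tourL E p q := by
  rw [tourL, dif_pos h]
  exact (exists_tour E h).choose_spec

lemma reach_seq {W : Type*} (E' : W → W → Prop) (ρ : ℕ → W)
    (hρ : ∀ n, E' (ρ n) (ρ (n + 1))) {b c : ℕ} (h : b ≤ c) :
    Reach E' (ρ b) (ρ c) := by
  induction c, h using Nat.le_induction with
  | base => exact .refl
  | succ n hn ih => exact ih.tail (hρ n)

lemma eventually_stab {W : Type*} [Finite W] (E' : W → W → Prop) (ρ : ℕ → W)
    (hρ : ∀ n, E' (ρ n) (ρ (n + 1))) :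
    ∃ N, ∀ n, N ≤ n → SameSCC E' (ρ N) (ρ n) := by
  obtain ⟨w, hw0⟩ := Finite.exists_infinite_fiber ρ
  have hw : (ρ ⁻¹' {w}).Infinite := Set.infinite_coe_iff.mp hw0
  have hub : ∀ M : ℕ, ∃ m, M ≤ m ∧ ρ m = w := by
    intro M
    by_contra hcon
    push_neg at hcon
    refine hw (Set.Finite.subset (Set.finite_Iio M) ?_)
    intro n hn
    by_contra hb
    exact hcon n (le_of_not_gt hb) (Set.mem_singleton_iff.1 hn)
  obtain ⟨N, _, hN⟩ := hub 0
  refine ⟨N, fun n hn => ⟨reach_seq E' ρ hρ hn, ?_⟩⟩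
  obtain ⟨m, hm, hmw⟩ := hub n
  have : Reach E' (ρ n) (ρ m) := reach_seq E' ρ hρ hm
  rwa [hmw, ← hN] at this

lemma pigeon {F : Type*} [Finite F] {P : ℕ → Prop}
    (h : ∀ M, ∃ m, M ≤ m ∧ P m) (f : ℕ → F) :
    ∃ y, ∀ M, ∃ m, M ≤ m ∧ P m ∧ f m = y := by
  by_contra hcon
  push_neg at hcon
  have := Fintype.ofFinite F
  choose Mf hMf using hcon
  set B := Finset.univ.sup Mf with hB
  obtain ⟨m, hm, hPm⟩ := h B
  exact hMf (f m) m (le_trans (Finset.le_sup (Finset.mem_univ (f m))) hm) hPm rfl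

end PathLib
section Machine

variable {V : Type*} (E : V → V → Prop) [Fintype V]

/-- State of the chasing/touring transducer. -/
structure MSt (V : Type*) where
  hist : List V
  pos : V
  Q : List V
  e : ℕ

/-- One step of the transducer on new observation `v`. -/
noncomputable def mstep (st : MSt V) (v : V) : MSt V :=
  let l : List V :=
    if st.Q = [] then
      (if SameSCC E st.pos v then tourL E st.pos v
       else (st.hist ++ [v]).drop (st.e + 1))
    else st.Q
  ⟨st.hist ++ [v], l.head?.getD st.pos, l.tail,
    if st.Q = [] then st.hist.length else st.e⟩

/-- Run of the transducer on the sequence `σ`. -/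
noncomputable def Trun (σ : ℕ → V) : ℕ → MSt V
  | 0 => ⟨[σ 0], σ 0, [], 0⟩
  | n + 1 => mstep E (Trun σ n) (σ (n + 1))

/-- The transformed sequence. -/
noncomputable def tauF (σ : ℕ → V) (n : ℕ) : V := (Trun E σ n).pos

@[simp] lemma tauF_zero (σ : ℕ → V) : tauF E σ 0 = σ 0 := rfl

lemma mstep_cons {st : MSt V} {x : V} {rest : List V} (hQ : st.Q = x :: rest) (v : V) :
    mstep E st v = ⟨st.hist ++ [v], x, rest, st.e⟩ := by
  simp [mstep, hQ]

lemma mstep_nil_tour {st : MSt V} {v : V} (hQ : st.Q = []) (hS : SameSCC E st.pos v) :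
    mstep E st v = ⟨st.hist ++ [v], (tourL E st.pos v).head?.getD st.pos,
      (tourL E st.pos v).tail, st.hist.length⟩ := by
  simp [mstep, hQ, hS]

lemma mstep_nil_chase {st : MSt V} {v : V} (hQ : st.Q = []) (hS : ¬ SameSCC E st.pos v) :
    mstep E st v = ⟨st.hist ++ [v],
      ((st.hist ++ [v]).drop (st.e + 1)).head?.getD st.pos,
      ((st.hist ++ [v]).drop (st.e + 1)).tail, st.hist.length⟩ := by
  simp [mstep, hQ, hS]

lemma Trun_congr {σ σ' : ℕ → V} : ∀ n, (∀ k, k ≤ n → σ k = σ' k) →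
    Trun E σ n = Trun E σ' n
  | 0, h => by simp [Trun, h 0 (le_refl 0)]
  | n + 1, h => by
    simp only [Trun]
    rw [Trun_congr n (fun k hk => h k (Nat.le_succ_of_le hk)), h (n + 1) (le_refl _)]

lemma Trun_hist (σ : ℕ → V) : ∀ n, (Trun E σ n).hist = (List.range (n + 1)).map σ
  | 0 => by simp [Trun, List.range_succ]
  | n + 1 => by
    have : (Trun E σ (n + 1)).hist = (Trun E σ n).hist ++ [σ (n + 1)] := by
      rcases hQ : (Trun E σ n).Q with _ | ⟨x, rest⟩
      · by_cases hS : SameSCC E (Trun E σ n).pos (σ (n + 1))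
        · rw [show Trun E σ (n+1) = mstep E (Trun E σ n) (σ (n+1)) from rfl,
            mstep_nil_tour E hQ hS]
        · rw [show Trun E σ (n+1) = mstep E (Trun E σ n) (σ (n+1)) from rfl,
            mstep_nil_chase E hQ hS]
      · rw [show Trun E σ (n+1) = mstep E (Trun E σ n) (σ (n+1)) from rfl,
          mstep_cons E hQ]
    rw [this, Trun_hist σ n, List.range_succ (n := n + 1)]
    simp

lemma drop_map_range (σ : ℕ → V) (m a : ℕ) :
    ((List.range m).map σ).drop a = (List.range (m - a)).map (fun t => σ (a + t)) := by
  apply List.ext_getElem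
  · simp
  · intro i h1 h2
    simp only [List.getElem_drop, List.getElem_map, List.getElem_range]

lemma funPath (σ : ℕ → V) (hσ : ∀ n, E (σ n) (σ (n + 1))) (a : ℕ) : ∀ k,
    IsPath E (σ a) ((List.range k).map (fun t => σ (a + 1 + t))) ∧
      lastV (σ a) ((List.range k).map (fun t => σ (a + 1 + t))) = σ (a + k)
  | 0 => by simp
  | k + 1 => by
    obtain ⟨h1, h2⟩ := funPath σ hσ a k
    rw [List.range_succ, List.map_append]
    constructor
    · refine (isPath_append E).2 ⟨h1, ?_⟩
      rw [h2]
      have : a + 1 + k = (a + k) + 1 := by omega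
      simp [this, hσ (a + k)]
    · rw [lastV_append, h2]
      have : a + 1 + k = a + (k + 1) := by omega
      simp [this]

/-- The main invariant of the transducer run. -/
lemma Trun_inv (σ : ℕ → V) (hσ : ∀ n, E (σ n) (σ (n + 1))) : ∀ n,
    (Trun E σ n).e ≤ n ∧
    lastV (Trun E σ n).pos (Trun E σ n).Q = σ (Trun E σ n).e ∧
    IsPath E (Trun E σ n).pos (Trun E σ n).Q
  | 0 => by simp [Trun]
  | n + 1 => by
    obtain ⟨he, hlast, hpath⟩ := Trun_inv σ hσ n
    have hrec : Trun E σ (n + 1) = mstep E (Trun E σ n) (σ (n + 1)) := rfl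
    have hlen : (Trun E σ n).hist.length = n + 1 := by
      rw [Trun_hist]; simp
    rcases hQ : (Trun E σ n).Q with _ | ⟨x, rest⟩
    · rw [hQ] at hlast
      simp only [lastV_nil] at hlast
      by_cases hS : SameSCC E (Trun E σ n).pos (σ (n + 1))
      · rw [hrec, mstep_nil_tour E hQ hS]
        obtain ⟨hp, hl, -⟩ := tourL_spec E hS
        rcases ht : tourL E (Trun E σ n).pos (σ (n + 1)) with _ | ⟨y, t⟩
        · rw [ht] at hl
          simp only [lastV_nil] at hl
          exact ⟨by simp [hlen], by simp [hlen, hl], by simp⟩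
        · rw [ht] at hp hl
          simp only [lastV_cons] at hl
          refine ⟨by simp [hlen], ?_, ?_⟩
          · simpa [hlen] using hl
          · simpa using hp.2
      · rw [hrec, mstep_nil_chase E hQ hS]
        have hh : (Trun E σ n).hist ++ [σ (n + 1)] = (List.range (n + 2)).map σ := by
          rw [Trun_hist, List.range_succ (n := n + 1)]
          simp
        have hdrop : ((Trun E σ n).hist ++ [σ (n + 1)]).drop ((Trun E σ n).e + 1) =
            (List.range (n + 1 - (Trun E σ n).e)).map
              (fun t => σ ((Trun E σ n).e + 1 + t)) := by
          rw [hh, drop_map_range,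
            show n + 2 - ((Trun E σ n).e + 1) = n + 1 - (Trun E σ n).e from by omega]
        obtain ⟨hp, hl⟩ := funPath E σ hσ (Trun E σ n).e (n + 1 - (Trun E σ n).e)
        rw [show (Trun E σ n).e + (n + 1 - (Trun E σ n).e) = n + 1 from by omega] at hl
        have hcons : (List.range (n + 1 - (Trun E σ n).e)).map
            (fun t => σ ((Trun E σ n).e + 1 + t)) =
            σ ((Trun E σ n).e + 1) ::
              (List.range (n - (Trun E σ n).e)).map
                (fun t => σ ((Trun E σ n).e + 1 + (t + 1))) := by
          rw [show n + 1 - (Trun E σ n).e = (n - (Trun E σ n).e) + 1 from by omega,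
            List.range_succ_eq_map, List.map_cons, List.map_map]
          simp [Function.comp_def]
        rw [hdrop, hcons]
        rw [hcons, ← hlast] at hp hl
        simp only [List.head?_cons, Option.getD_some, List.tail_cons]
        exact ⟨by simp [hlen], by simpa [hlen] using hl, hp.2⟩
    · rw [hQ] at hlast hpath
      rw [hrec, mstep_cons E hQ]
      exact ⟨Nat.le_succ_of_le he, hlast, hpath.2⟩

end Machine
section Machine2

variable {V : Type*} (E : V → V → Prop) [Fintype V]

lemma tau_legal (σ : ℕ → V) (hσ : ∀ n, E (σ n) (σ (n + 1))) (n : ℕ) :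
    E (tauF E σ n) (tauF E σ (n + 1)) := by
  obtain ⟨he, hlast, hpath⟩ := Trun_inv E σ hσ n
  have hrec : Trun E σ (n + 1) = mstep E (Trun E σ n) (σ (n + 1)) := rfl
  rcases hQ : (Trun E σ n).Q with _ | ⟨x, rest⟩
  · rw [hQ] at hlast
    simp only [lastV_nil] at hlast
    by_cases hS : SameSCC E (Trun E σ n).pos (σ (n + 1))
    · obtain ⟨hp, hl, hcov⟩ := tourL_spec E hS
      rcases ht : tourL E (Trun E σ n).pos (σ (n + 1)) with _ | ⟨y, t⟩
      · -- degenerate tour: the SCC of pos is trivial and pos = σ (n+1)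
        rw [ht] at hl hcov
        simp only [lastV_nil] at hl
        have hpos1 : tauF E σ (n + 1) = (Trun E σ n).pos := by
          rw [tauF, hrec, mstep_nil_tour E hQ hS, ht]
          rfl
        rw [hpos1, tauF]
        -- show E pos pos using that σ (e+1) is in the (trivial) SCC of pos
        have h1 : Reach E (Trun E σ n).pos (σ ((Trun E σ n).e + 1)) := by
          rw [hlast]
          exact Relation.ReflTransGen.single (hσ _)
        have h2 : Reach E (σ ((Trun E σ n).e + 1)) (Trun E σ n).pos := by
          rw [hl]
          exact reach_seq E σ hσ (by omega)
        have := hcov (σ ((Trun E σ n).e + 1)) ⟨h1, h2⟩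
        simp only [List.mem_singleton] at this
        have hE := hσ (Trun E σ n).e
        rw [this] at hE
        rwa [← hlast] at hE
      · rw [ht] at hp
        have hpos1 : tauF E σ (n + 1) = y := by
          rw [tauF, hrec, mstep_nil_tour E hQ hS, ht]
          rfl
        rw [hpos1]
        exact hp.1
    · -- chase: pos = σ e moves to σ (e+1)
      have hh : (Trun E σ n).hist ++ [σ (n + 1)] = (List.range (n + 2)).map σ := by
        rw [Trun_hist, List.range_succ (n := n + 1)]
        simp
      have hdrop : ((Trun E σ n).hist ++ [σ (n + 1)]).drop ((Trun E σ n).e + 1) =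
          (List.range (n + 1 - (Trun E σ n).e)).map
            (fun t => σ ((Trun E σ n).e + 1 + t)) := by
        rw [hh, drop_map_range,
          show n + 2 - ((Trun E σ n).e + 1) = n + 1 - (Trun E σ n).e from by omega]
      have hcons : (List.range (n + 1 - (Trun E σ n).e)).map
          (fun t => σ ((Trun E σ n).e + 1 + t)) =
          σ ((Trun E σ n).e + 1) ::
            (List.range (n - (Trun E σ n).e)).map
              (fun t => σ ((Trun E σ n).e + 1 + (t + 1))) := by
        rw [show n + 1 - (Trun E σ n).e = (n - (Trun E σ n).e) + 1 from by omega,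
          List.range_succ_eq_map, List.map_cons, List.map_map]
        simp [Function.comp_def]
      have hpos1 : tauF E σ (n + 1) = σ ((Trun E σ n).e + 1) := by
        rw [tauF, hrec, mstep_nil_chase E hQ hS, hdrop, hcons]
        rfl
      rw [hpos1, tauF, hlast]
      exact hσ _
  · rw [hQ] at hpath
    have hpos1 : tauF E σ (n + 1) = x := by
      rw [tauF, hrec, mstep_cons E hQ]
    rw [hpos1]
    exact hpath.1

lemma Trun_Q_succ_cons {σ : ℕ → V} {n : ℕ} {x : V} {rest : List V}
    (hQ : (Trun E σ n).Q = x :: rest) :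
    (Trun E σ (n + 1)).Q = rest ∧ (Trun E σ (n + 1)).pos = x ∧
      (Trun E σ (n + 1)).e = (Trun E σ n).e := by
  have hrec : Trun E σ (n + 1) = mstep E (Trun E σ n) (σ (n + 1)) := rfl
  rw [hrec, mstep_cons E hQ]
  exact ⟨rfl, rfl, rfl⟩

lemma empties (σ : ℕ → V) : ∀ n, ∃ m, n ≤ m ∧ (Trun E σ m).Q = [] := by
  have key : ∀ k n, (Trun E σ n).Q.length ≤ k → ∃ m, n ≤ m ∧ (Trun E σ m).Q = [] := by
    intro k
    induction k with
    | zero =>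
      intro n h
      exact ⟨n, le_refl n, List.length_eq_zero_iff.1 (Nat.le_zero.1 h)⟩
    | succ k ih =>
      intro n h
      rcases hQ : (Trun E σ n).Q with _ | ⟨x, rest⟩
      · exact ⟨n, le_refl n, hQ⟩
      · obtain ⟨hQ', _, _⟩ := Trun_Q_succ_cons E hQ
        obtain ⟨m, hm, hm'⟩ := ih (n + 1) (by rw [hQ']; rw [hQ] at h; simpa using h)
        exact ⟨m, by omega, hm'⟩
  intro n
  exact key (Trun E σ n).Q.length n (le_refl _)

lemma queue_visit (σ : ℕ → V) : ∀ n y, y ∈ (Trun E σ n).Q →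
    ∃ m, n < m ∧ tauF E σ m = y := by
  have key : ∀ k n y, (Trun E σ n).Q.length ≤ k → y ∈ (Trun E σ n).Q →
      ∃ m, n < m ∧ tauF E σ m = y := by
    intro k
    induction k with
    | zero =>
      intro n y h hy
      rw [List.length_eq_zero_iff.1 (Nat.le_zero.1 h)] at hy
      simp at hy
    | succ k ih =>
      intro n y h hy
      rcases hQ : (Trun E σ n).Q with _ | ⟨x, rest⟩
      · rw [hQ] at hy; simp at hy
      · obtain ⟨hQ', hpos, _⟩ := Trun_Q_succ_cons E hQ
        rw [hQ] at hy
        rcases List.mem_cons.1 hy with rfl | hy'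
        · exact ⟨n + 1, by omega, hpos⟩
        · obtain ⟨m, hm, hm'⟩ := ih (n + 1) y
            (by rw [hQ']; rw [hQ] at h; simpa using h) (by rw [hQ']; exact hy')
          exact ⟨m, by omega, hm'⟩
  intro n y hy
  exact key (Trun E σ n).Q.length n y (le_refl _) hy

lemma refill_e {σ : ℕ → V} {n : ℕ} (hQ : (Trun E σ n).Q = []) :
    (Trun E σ (n + 1)).e = n + 1 := by
  have hrec : Trun E σ (n + 1) = mstep E (Trun E σ n) (σ (n + 1)) := rfl
  have hlen : (Trun E σ n).hist.length = n + 1 := by rw [Trun_hist]; simp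
  by_cases hS : SameSCC E (Trun E σ n).pos (σ (n + 1))
  · rw [hrec, mstep_nil_tour E hQ hS]; exact hlen
  · rw [hrec, mstep_nil_chase E hQ hS]; exact hlen

lemma e_mono (σ : ℕ → V) (hσ : ∀ n, E (σ n) (σ (n + 1))) {m n : ℕ} (h : m ≤ n) :
    (Trun E σ m).e ≤ (Trun E σ n).e := by
  induction n, h using Nat.le_induction with
  | base => exact le_refl _
  | succ n hn ih =>
    refine le_trans ih ?_
    rcases hQ : (Trun E σ n).Q with _ | ⟨x, rest⟩
    · rw [refill_e E hQ]
      exact le_trans (Trun_inv E σ hσ n).1 (by omega)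
    · rw [(Trun_Q_succ_cons E hQ).2.2]

/-- Main property: if `σ` eventually stays in one SCC, then the transformed
sequence visits every vertex of that SCC infinitely often. -/
lemma visits (σ : ℕ → V) (hσ : ∀ n, E (σ n) (σ (n + 1))) (N : ℕ)
    (hstab : ∀ n, N ≤ n → SameSCC E (σ N) (σ n)) (x : V)
    (hx : SameSCC E (σ N) x) (M : ℕ) :
    ∃ m, M ≤ m ∧ tauF E σ m = x := by
  obtain ⟨m₁, hm₁, hQ₁⟩ := empties E σ (max M N)
  obtain ⟨m₂, hm₂, hQ₂⟩ := empties E σ (m₁ + 1)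
  have he₂ : N ≤ (Trun E σ m₂).e := by
    have h1 : (Trun E σ (m₁ + 1)).e = m₁ + 1 := refill_e E hQ₁
    have h2 := e_mono E σ hσ hm₂
    rw [h1] at h2
    omega
  have hlast := (Trun_inv E σ hσ m₂).2.1
  rw [hQ₂] at hlast
  simp only [lastV_nil] at hlast
  have hposC : SameSCC E (σ N) (Trun E σ m₂).pos := by
    rw [hlast]; exact hstab _ he₂
  have hS : SameSCC E (Trun E σ m₂).pos (σ (m₂ + 1)) :=
    sameSCC_trans E (sameSCC_symm E hposC) (hstab _ (by omega))
  obtain ⟨hp, hl, hcov⟩ := tourL_spec E hS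
  have hxpos : SameSCC E (Trun E σ m₂).pos x :=
    sameSCC_trans E (sameSCC_symm E hposC) hx
  have hmem := hcov x hxpos
  have hMm₂ : M ≤ m₂ := by omega
  rcases List.mem_cons.1 hmem with rfl | hmem'
  · exact ⟨m₂, hMm₂, rfl⟩
  · rcases ht : tourL E (Trun E σ m₂).pos (σ (m₂ + 1)) with _ | ⟨y, t⟩
    · rw [ht] at hmem'; simp at hmem'
    · rw [ht] at hmem'
      have hrec : Trun E σ (m₂ + 1) = mstep E (Trun E σ m₂) (σ (m₂ + 1)) := rfl
      have hst : (Trun E σ (m₂ + 1)).pos = y ∧ (Trun E σ (m₂ + 1)).Q = t := by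
        rw [hrec, mstep_nil_tour E hQ₂ hS, ht]
        exact ⟨rfl, rfl⟩
      rcases List.mem_cons.1 hmem' with rfl | hmem''
      · exact ⟨m₂ + 1, by omega, hst.1⟩
      · obtain ⟨m, hm, hm'⟩ := queue_visit E σ (m₂ + 1) x (by rw [hst.2]; exact hmem'')
        exact ⟨m, by omega, hm'⟩

end Machine2
section VirtualPlay

variable {I O : Type*}

/-- Prefix of the play obtained by letting strategy `f` answer the inputs `μ`. -/
def mkVirtL (f : Strat I O) (o₀ : O) (μ : ℕ → I) : ℕ → List (I × O)
  | 0 => [(μ 0, o₀)]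
  | n + 1 => mkVirtL f o₀ μ n ++
      [(μ (n + 1), f (mkVirtL f o₀ μ n) (μ (n + 1)))]

/-- The play obtained by letting strategy `f` answer the inputs `μ`. -/
def mkVirt (f : Strat I O) (o₀ : O) (μ : ℕ → I) (n : ℕ) : I × O :=
  (mkVirtL f o₀ μ n).getLastD (μ 0, o₀)

@[simp] lemma mkVirt_zero (f : Strat I O) (o₀ : O) (μ : ℕ → I) :
    mkVirt f o₀ μ 0 = (μ 0, o₀) := rfl

lemma mkVirt_succ (f : Strat I O) (o₀ : O) (μ : ℕ → I) (n : ℕ) :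
    mkVirt f o₀ μ (n + 1) = (μ (n + 1), f (mkVirtL f o₀ μ n) (μ (n + 1))) := by
  rw [mkVirt, mkVirtL]
  exact List.getLastD_concat

lemma mkVirt_fst (f : Strat I O) (o₀ : O) (μ : ℕ → I) (n : ℕ) :
    (mkVirt f o₀ μ n).1 = μ n := by
  cases n with
  | zero => rfl
  | succ n => rw [mkVirt_succ]

lemma mkVirtL_eq (f : Strat I O) (o₀ : O) (μ : ℕ → I) : ∀ n,
    mkVirtL f o₀ μ n = (List.range (n + 1)).map (mkVirt f o₀ μ)
  | 0 => by simp [mkVirtL, List.range_succ]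
  | n + 1 => by
    rw [mkVirtL, mkVirtL_eq f o₀ μ n, List.range_succ (n := n + 1), List.map_append,
      ← mkVirtL_eq f o₀ μ n]
    simp [mkVirt_succ]

lemma hist_mkVirt (f : Strat I O) (o₀ : O) (μ : ℕ → I) (n : ℕ) :
    hist (mkVirt f o₀ μ) n = mkVirtL f o₀ μ n := by
  rw [hist, mkVirtL_eq]

lemma mkVirt_consistent (f : Strat I O) (o₀ : O) (μ : ℕ → I) :
    Consistent f (μ 0, o₀) (mkVirt f o₀ μ) := by
  refine ⟨rfl, fun n => ?_⟩
  rw [hist_mkVirt, mkVirt_succ]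

lemma mkVirtL_congr (f : Strat I O) (o₀ : O) {μ μ' : ℕ → I} : ∀ n,
    (∀ k, k ≤ n → μ k = μ' k) → mkVirtL f o₀ μ n = mkVirtL f o₀ μ' n
  | 0, h => by simp [mkVirtL, h 0 (le_refl 0)]
  | n + 1, h => by
    rw [mkVirtL, mkVirtL, mkVirtL_congr f o₀ n (fun k hk => h k (Nat.le_succ_of_le hk)),
      h (n + 1) (le_refl _)]

lemma mkVirt_congr (f : Strat I O) (o₀ : O) {μ μ' : ℕ → I} (n : ℕ)
    (h : ∀ k, k ≤ n → μ k = μ' k) : mkVirt f o₀ μ n = mkVirt f o₀ μ' n := by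
  cases n with
  | zero => simp [h 0 (le_refl 0)]
  | succ n =>
    rw [mkVirt_succ, mkVirt_succ,
      mkVirtL_congr f o₀ n (fun k hk => h k (Nat.le_succ_of_le hk)), h (n + 1) (le_refl _)]

@[simp] lemma hist_length {π : ℕ → I × O} {n : ℕ} : (hist π n).length = n + 1 := by
  simp [hist]

lemma histMapFst (π : ℕ → I × O) (n : ℕ) :
    (hist π n).map Prod.fst ++ [(π (n + 1)).1] =
      (List.range (n + 2)).map (fun k => (π k).1) := by
  rw [hist, List.range_succ (n := n + 1), List.map_append, List.map_map]
  rfl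

lemma getD_map_range {A : Type*} (ι : ℕ → A) (m k : ℕ) (d : A) (h : k < m) :
    ((List.range m).map ι).getD k d = ι k := by
  rw [List.getD_eq_getElem _ _ (by simpa using h)]
  simp

end VirtualPlay

section SCCProj

variable {I O : Type*}

lemma reach_fst {EI : I → I → Prop} {EO : O → O → Prop} {p q : I × O}
    (h : Reach (prodEdge EI EO) p q) : Reach EI p.1 q.1 :=
  Relation.ReflTransGen.lift (r := prodEdge EI EO) (p := EI) Prod.fst (fun _ _ hr => hr.1) _ _ h

lemma reach_snd {EI : I → I → Prop} {EO : O → O → Prop} {p q : I × O}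
    (h : Reach (prodEdge EI EO) p q) : Reach EO p.2 q.2 :=
  Relation.ReflTransGen.lift (r := prodEdge EI EO) (p := EO) Prod.snd (fun _ _ hr => hr.2) _ _ h

lemma sameSCC_fst {EI : I → I → Prop} {EO : O → O → Prop} {p q : I × O}
    (h : SameSCC (prodEdge EI EO) p q) : SameSCC EI p.1 q.1 :=
  ⟨reach_fst h.1, reach_fst h.2⟩

lemma sameSCC_snd {EI : I → I → Prop} {EO : O → O → Prop} {p q : I × O}
    (h : SameSCC (prodEdge EI EO) p q) : SameSCC EO p.2 q.2 :=
  ⟨reach_snd h.1, reach_snd h.2⟩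

end SCCProj
section MainDirections

variable {I O : Type*} [Fintype I] [Fintype O] {k : ℕ} {nl ml : Fin k → ℕ}
variable {EI : I → I → Prop} {EO : O → O → Prop}
variable {a : ∀ l : Fin k, Fin (nl l) → I → Prop}
variable {g : ∀ l : Fin k, Fin (ml l) → O → Prop}

/-- The Büchi strategy built from a GR(k) strategy: feed `f` the transformed
(touring) input sequence and play its outputs. -/
noncomputable def hatF (EI : I → I → Prop) [Fintype I] (f : Strat I O) (o₀ : O) :
    Strat I O :=
  fun h i' =>
    (mkVirt f o₀ (tauF EI (fun m => (h.map Prod.fst ++ [i']).getD m i')) h.length).2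

lemma dir1 {s : I × O} (hw : WinsGRk EI EO a g s) :
    SysWins EI EO (AcceptingSt EI EO a g) s := by
  classical
  obtain ⟨f, hf⟩ := hw
  refine ⟨hatF EI f s.2, ?_⟩
  intro π hcons henv
  set ι : ℕ → I := fun n => (π n).1 with hι
  have henv' : ∀ n, EI (ι n) (ι (n + 1)) := henv
  set Vp : ℕ → I × O := mkVirt f s.2 (tauF EI ι) with hVp
  have hout : ∀ n, (π n).2 = (Vp n).2 := by
    intro n
    cases n with
    | zero => rw [hcons.1, hVp, mkVirt_zero]
    | succ n =>
      rw [hcons.2 n]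
      simp only [hatF, hist_length]
      refine congrArg Prod.snd (mkVirt_congr f s.2 (n + 1) (fun m hm => ?_))
      exact congrArg MSt.pos (Trun_congr EI m (fun k' hk' => by
        rw [histMapFst]
        exact getD_map_range (fun q => (π q).1) (n + 2) k' _ (by omega)))
  have hconsV : Consistent f s Vp := by
    have h0 := mkVirt_consistent f s.2 (tauF EI ι)
    rwa [show (tauF EI ι 0, s.2) = s from by
      rw [tauF_zero]; show ((π 0).1, s.2) = s; rw [hcons.1]] at h0
  have henvV : EnvLegal EI Vp := by
    intro n
    simp only [hVp, mkVirt_fst]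
    exact tau_legal EI ι henv' n
  obtain ⟨hsysV, hsat⟩ := hf Vp hconsV henvV
  have hsysπ : SysLegal EO π := by
    intro n
    rw [hout n, hout (n + 1)]
    exact hsysV n
  refine ⟨hsysπ, ?_⟩
  have hprod : ∀ n, prodEdge EI EO (π n) (π (n + 1)) := fun n => ⟨henv n, hsysπ n⟩
  obtain ⟨N, hN⟩ := eventually_stab (prodEdge EI EO) π hprod
  have hstabI : ∀ m, N ≤ m → SameSCC EI (ι N) (ι m) := fun m hm => sameSCC_fst (hN m hm)
  have hacc : ∀ n, N ≤ n → AcceptingSt EI EO a g (π n) := by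
    intro n hn l
    by_cases hc : ∃ ii, ∀ i' ∈ sccProjI EI EO (π n), ¬ a l ii i'
    · exact Or.inr hc
    · push_neg at hc
      left
      have hass : ∀ ii, InfOften (fun p : I × O => a l ii p.1) Vp := by
        intro ii
        obtain ⟨i', hi'm, hai⟩ := hc ii
        obtain ⟨o'', hscc⟩ := hi'm
        have hscc' : SameSCC (prodEdge EI EO) (π N) (i', o'') :=
          sameSCC_trans _ (hN n hn) hscc
        have hIi : SameSCC EI (ι N) i' := sameSCC_fst hscc'
        intro M
        obtain ⟨m, hm, hmx⟩ := visits EI ι henv' N hstabI i' hIi M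
        refine ⟨m, hm, ?_⟩
        simp only [hVp, mkVirt_fst]
        rw [hmx]
        exact hai
      have hguar := hsat l hass
      intro j
      have hinf : ∀ M, ∃ m, M ≤ m ∧ (N ≤ m ∧ g l j ((π m).2)) := by
        intro M
        obtain ⟨m, hm, hgm⟩ := hguar j (max M N)
        exact ⟨m, le_trans (le_max_left _ _) hm,
          le_trans (le_max_right _ _) hm, by rw [hout m]; exact hgm⟩
      obtain ⟨p, hp⟩ := pigeon hinf π
      obtain ⟨m, _, ⟨hmN, hgm⟩, hπm⟩ := hp 0
      refine ⟨p.2, ⟨p.1, ?_⟩, ?_⟩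
      · have hh := sameSCC_trans _ (sameSCC_symm _ (hN n hn)) (hN m hmN)
        rw [hπm] at hh
        rwa [Prod.mk.eta]
      · rw [← hπm]
        exact hgm
  exact fun M => ⟨max M N, le_max_left _ _, hacc _ (le_max_right _ _)⟩

/-- The GR(k) strategy built from a Büchi strategy: run `f` on the real inputs
and play the transformed (touring) version of its outputs. -/
noncomputable def primeF (EO : O → O → Prop) [Fintype O] (f : Strat I O) (o₀ : O) :
    Strat I O :=
  fun h i' =>
    tauF EO (fun m =>
      (mkVirt f o₀ (fun m' => (h.map Prod.fst ++ [i']).getD m' i') m).2) h.length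

lemma dir2 {s : I × O} (hw : SysWins EI EO (AcceptingSt EI EO a g) s) :
    WinsGRk EI EO a g s := by
  classical
  obtain ⟨f, hf⟩ := hw
  refine ⟨primeF EO f s.2, ?_⟩
  intro π hcons henv
  set ι : ℕ → I := fun n => (π n).1 with hι
  have henv' : ∀ n, EI (ι n) (ι (n + 1)) := henv
  set Vp : ℕ → I × O := mkVirt f s.2 ι with hVp
  set ω : ℕ → O := fun n => (Vp n).2 with hω
  have hout : ∀ n, (π n).2 = tauF EO ω n := by
    intro n
    cases n with
    | zero =>
      rw [hcons.1]
      rfl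
    | succ n =>
      rw [hcons.2 n]
      simp only [primeF, hist_length]
      refine congrArg MSt.pos (Trun_congr EO (n + 1) (fun m hm => ?_))
      refine congrArg Prod.snd (mkVirt_congr f s.2 m (fun k' hk' => ?_))
      rw [histMapFst]
      exact getD_map_range (fun q => (π q).1) (n + 2) k' _ (by omega)
  have hconsV : Consistent f s Vp := by
    have h0 := mkVirt_consistent f s.2 ι
    rwa [show (ι 0, s.2) = s from by show ((π 0).1, s.2) = s; rw [hcons.1]] at h0
  have henvV : EnvLegal EI Vp := by
    intro n
    simp only [hVp, mkVirt_fst]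
    exact henv' n
  obtain ⟨hsysV, haccV⟩ := hf Vp hconsV henvV
  have hω' : ∀ n, EO (ω n) (ω (n + 1)) := hsysV
  have hsysπ : SysLegal EO π := by
    intro n
    rw [hout n, hout (n + 1)]
    exact tau_legal EO ω hω' n
  refine ⟨hsysπ, ?_⟩
  intro l hass
  have hprodV : ∀ n, prodEdge EI EO (Vp n) (Vp (n + 1)) := fun n => ⟨henvV n, hsysV n⟩
  obtain ⟨N, hN⟩ := eventually_stab (prodEdge EI EO) Vp hprodV
  obtain ⟨n₀, hn₀, haccn₀⟩ := haccV N
  have hstabO : ∀ m, N ≤ m → SameSCC EO (ω N) (ω m) := fun m hm => sameSCC_snd (hN m hm)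
  have hno2 : ¬ ∃ ii, ∀ i' ∈ sccProjI EI EO (Vp n₀), ¬ a l ii i' := by
    rintro ⟨ii, hii⟩
    have hinf : ∀ M, ∃ m, M ≤ m ∧ (N ≤ m ∧ a l ii (ι m)) := by
      intro M
      obtain ⟨m, hm, ham⟩ := hass ii (max M N)
      exact ⟨m, le_trans (le_max_left _ _) hm, le_trans (le_max_right _ _) hm, ham⟩
    obtain ⟨p, hp⟩ := pigeon hinf Vp
    obtain ⟨m, _, ⟨hmN, ham⟩, hVm⟩ := hp 0
    have hsccp : SameSCC (prodEdge EI EO) (Vp n₀) p := by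
      have hh := sameSCC_trans _ (sameSCC_symm _ (hN n₀ hn₀)) (hN m hmN)
      rwa [hVm] at hh
    refine hii p.1 ⟨p.2, by rwa [Prod.mk.eta]⟩ ?_
    rw [← hVm]
    show a l ii ((Vp m).1)
    simp only [hVp, mkVirt_fst]
    exact ham
  rcases haccn₀ l with h1 | h2
  · intro j
    obtain ⟨oj, hojm, hgoj⟩ := h1 j
    obtain ⟨i'', hscc⟩ := hojm
    have hsccN : SameSCC (prodEdge EI EO) (Vp N) (i'', oj) :=
      sameSCC_trans _ (hN n₀ hn₀) hscc
    have hOj : SameSCC EO (ω N) oj := sameSCC_snd hsccN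
    intro M
    obtain ⟨m, hm, hmx⟩ := visits EO ω hω' N hstabO oj hOj M
    exact ⟨m, hm, by show g l j ((π m).2); rw [hout m, hmx]; exact hgoj⟩
  · exact absurd h2 hno2

end MainDirections

/-- Realizability equivalence: the separated GR(k) game is realizable (for every
initial input satisfying θ_I there is an initial output satisfying θ_O from which
the system wins) iff the weak Büchi game GF(acc) is realizable, where acc is the
union of accepting SCCs determined by the GR(k) formula. -/
theorem grk_realizability_iff {I O : Type*} [Fintype I] [Fintype O]
    {k : ℕ} {nl ml : Fin k → ℕ}
    (EI : I → I → Prop) (EO : O → O → Prop)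
    (a : ∀ l : Fin k, Fin (nl l) → I → Prop)
    (g : ∀ l : Fin k, Fin (ml l) → O → Prop)
    (θI : I → Prop) (θO : O → Prop) :
    (∀ i, θI i → ∃ o, θO o ∧ WinsGRk EI EO a g (i, o)) ↔
    (∀ i, θI i → ∃ o, θO o ∧ SysWins EI EO (AcceptingSt EI EO a g) (i, o)) := by
  constructor
  · intro H i hi
    obtain ⟨o, ho, hw⟩ := H i hi
    exact ⟨o, ho, dir1 hw⟩
  · intro H i hi
    obtain ⟨o, ho, hw⟩ := H i hi
    exact ⟨o, ho, dir2 hw⟩
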